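/- arXiv:2507.09773 — 2 statements merged into one kernel-verified Lean document; each statement's English description precedes it below -/
import Mathlib

section
/- Let ℓ be a prime, R a commutative ring, and c : ℤ/ℓℤ → R any function. Then Σ_{w ∈ S_ℓ} Π_{i ∈ ℤ/ℓℤ} c(i + w(i)) ≡ Σ_{k ∈ ℤ/ℓℤ} c(k)^ℓ modulo the ideal ℓR, where S_ℓ is the group of permutations of ℤ/ℓℤ. -/
private lemma aux_orbit {X : Type*} {R : Type*} [Fintype X] [DecidableEq X] [CommRing R]
    {ℓ : ℕ} (hℓ : ℓ.Prime) (σ : Equiv.Perm X) (hσ : ∀ x, (σ ^ ℓ) x = x)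
    (f : X → R) (hf : ∀ x, f (σ x) = f x) :
    ∀ T : Finset X, (∀ x ∈ T, σ x ∈ T) → (∀ x ∈ T, σ x ≠ x) →
      ∑ x ∈ T, f x ∈ Ideal.span {(ℓ : R)} := by
  intro T
  induction T using Finset.strongInduction with
  | _ T ih =>
  intro hT1 hT2
  rcases T.eq_empty_or_nonempty with rfl | ⟨x, hx⟩
  · simp
  -- basic facts
  have hiter : ∀ n : ℕ, ∀ y : X, (σ ^ n) y = (⇑σ)^[n] y := by
    intro n
    induction n with
    | zero => simp
    | succ n IH =>
        intro y
        rw [pow_succ', Function.iterate_succ']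
        simp only [Equiv.Perm.mul_apply, Function.comp_apply]
        rw [IH]
  have hfk : ∀ (k : ℕ) (y : X), f ((σ ^ k) y) = f y := by
    intro k
    induction k with
    | zero => simp
    | succ k IH =>
        intro y
        rw [pow_succ']
        simp only [Equiv.Perm.mul_apply]
        rw [hf, IH]
  have hmul : ∀ (q : ℕ) (y : X), (σ ^ (ℓ * q)) y = y := by
    intro q
    induction q with
    | zero => simp
    | succ q IH =>
        intro y
        rw [Nat.mul_succ, pow_add]
        simp only [Equiv.Perm.mul_apply]
        rw [hσ, IH]
  have hTpow : ∀ n : ℕ, (σ ^ n) x ∈ T := by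
    intro n
    induction n with
    | zero => simpa using hx
    | succ n IH =>
        rw [pow_succ']
        simp only [Equiv.Perm.mul_apply]
        exact hT1 _ IH
  -- minimal period of x is ℓ
  have hper : Function.IsPeriodicPt σ ℓ x := by
    show (⇑σ)^[ℓ] x = x
    rw [← hiter]; exact hσ x
  have hm : Function.minimalPeriod (⇑σ) x = ℓ := by
    rcases hℓ.eq_one_or_self_of_dvd _ hper.minimalPeriod_dvd with h1 | h
    · exact absurd (Function.minimalPeriod_eq_one_iff_isFixedPt.mp h1) (hT2 x hx)
    · exact h
  -- the orbit of x
  set O : Finset X := Finset.image (fun k : Fin ℓ => (σ ^ (k : ℕ)) x) Finset.univ with hO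
  have hinj : Function.Injective (fun k : Fin ℓ => (σ ^ (k : ℕ)) x) := by
    intro k₁ k₂ h
    have := Function.iterate_injOn_Iio_minimalPeriod (f := ⇑σ) (x := x)
      (by rw [hm]; exact Set.mem_Iio.mpr k₁.isLt)
      (by rw [hm]; exact Set.mem_Iio.mpr k₂.isLt)
      (by simpa only [← hiter] using h)
    exact Fin.ext this
  have hOsub : O ⊆ T := by
    intro y hy
    rw [hO, Finset.mem_image] at hy
    obtain ⟨k, -, rfl⟩ := hy
    exact hTpow _
  have hxO : x ∈ O := by
    rw [hO, Finset.mem_image]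
    exact ⟨⟨0, hℓ.pos⟩, Finset.mem_univ _, by simp⟩
  have hmemO : ∀ n : ℕ, (σ ^ n) x ∈ O := by
    intro n
    rw [hO, Finset.mem_image]
    refine ⟨⟨n % ℓ, Nat.mod_lt _ hℓ.pos⟩, Finset.mem_univ _, ?_⟩
    have : n % ℓ + ℓ * (n / ℓ) = n := Nat.mod_add_div n ℓ
    calc (σ ^ (n % ℓ)) x = (σ ^ (n % ℓ)) ((σ ^ (ℓ * (n / ℓ))) x) := by rw [hmul]
    _ = (σ ^ (n % ℓ + ℓ * (n / ℓ))) x := by rw [pow_add]; simp [Equiv.Perm.mul_apply]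
    _ = (σ ^ n) x := by rw [this]
  -- the orbit is mapped into itself, and so is its complement in T
  have hOmem' : ∀ y ∈ O, σ y ∈ O := by
    intro y hy
    rw [hO, Finset.mem_image] at hy
    obtain ⟨k, -, rfl⟩ := hy
    have : σ ((σ ^ (k : ℕ)) x) = (σ ^ ((k : ℕ) + 1)) x := by
      rw [pow_succ']; simp [Equiv.Perm.mul_apply]
    rw [this]; exact hmemO _
  have hOcl : ∀ y, σ y ∈ O → y ∈ O := by
    intro y hy
    rw [hO, Finset.mem_image] at hy
    obtain ⟨k, -, hk⟩ := hy
    have h1 : σ ((σ ^ ((k : ℕ) + ℓ - 1)) x) = (σ ^ ((k : ℕ) + ℓ)) x := by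
      rw [show (k : ℕ) + ℓ = ((k : ℕ) + ℓ - 1) + 1 by omega, pow_succ']
      simp [Equiv.Perm.mul_apply]
    have h2 : (σ ^ ((k : ℕ) + ℓ)) x = (σ ^ (k : ℕ)) x := by
      rw [pow_add]
      simp only [Equiv.Perm.mul_apply]
      rw [show σ ^ ℓ = σ ^ (ℓ * 1) by ring_nf, hmul]
    have : σ y = σ ((σ ^ ((k : ℕ) + ℓ - 1)) x) := by rw [h1, h2, hk]
    rw [σ.injective this]
    exact hmemO _
  -- split the sum
  have hsplit : ∑ y ∈ T \ O, f y + ∑ y ∈ O, f y = ∑ y ∈ T, f y :=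
    Finset.sum_sdiff hOsub
  have hOsum : ∑ y ∈ O, f y ∈ Ideal.span {(ℓ : R)} := by
    rw [hO, Finset.sum_image (fun a _ b _ h => hinj h)]
    have : ∀ k : Fin ℓ, f ((σ ^ (k : ℕ)) x) = f x := fun k => hfk _ _
    rw [Finset.sum_congr rfl fun k _ => this k, Finset.sum_const, Finset.card_univ,
      Fintype.card_fin, nsmul_eq_mul]
    exact Ideal.mem_span_singleton.mpr ⟨f x, rfl⟩
  have hss : T \ O ⊂ T := Finset.sdiff_ssubset hOsub ⟨x, hxO⟩
  have hrest : ∑ y ∈ T \ O, f y ∈ Ideal.span {(ℓ : R)} := by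
    refine ih _ hss ?_ ?_
    · intro y hy
      rw [Finset.mem_sdiff] at hy ⊢
      exact ⟨hT1 _ hy.1, fun h => hy.2 (hOcl _ h)⟩
    · intro y hy
      rw [Finset.mem_sdiff] at hy
      exact hT2 _ hy.1
  rw [← hsplit]
  exact add_mem hrest hOsum


/-- For a prime `ℓ`, a commutative ring `R` and any `c : ℤ/ℓℤ → R`, we have
`Σ_{w ∈ S_ℓ} Π_{i} c (i + w i) ≡ Σ_k c k ^ ℓ` modulo the ideal `ℓR`. -/
theorem stmt_7 (ℓ : ℕ) (hℓ : ℓ.Prime) [NeZero ℓ] {R : Type*} [CommRing R]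
    (c : ZMod ℓ → R) :
    (∑ w : Equiv.Perm (ZMod ℓ), ∏ i : ZMod ℓ, c (i + w i)) -
      (∑ k : ZMod ℓ, c k ^ ℓ) ∈ Ideal.span {(ℓ : R)} := by
  classical
  set f : Equiv.Perm (ZMod ℓ) → R := fun w => ∏ i : ZMod ℓ, c (i + w i) with hfdef
  -- the shift permutation on permutations
  set σ : Equiv.Perm (Equiv.Perm (ZMod ℓ)) :=
    { toFun := fun w => ((Equiv.addRight (1 : ZMod ℓ)).symm.trans w).trans
        (Equiv.addRight (-1 : ZMod ℓ))
      invFun := fun w => ((Equiv.addRight (-1 : ZMod ℓ)).symm.trans w).trans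
        (Equiv.addRight (1 : ZMod ℓ))
      left_inv := by intro w; ext i; simp
      right_inv := by intro w; ext i; simp } with hσdef
  have hσapp : ∀ (w : Equiv.Perm (ZMod ℓ)) (i : ZMod ℓ), σ w i = w (i - 1) - 1 := by
    intro w i
    simp [hσdef, sub_eq_add_neg]
  have hpow : ∀ (n : ℕ) (w : Equiv.Perm (ZMod ℓ)) (i : ZMod ℓ),
      (σ ^ n) w i = w (i - n) - n := by
    intro n
    induction n with
    | zero => intro w i; simp
    | succ n IH =>
        intro w i
        rw [pow_succ, Equiv.Perm.mul_apply, IH, hσapp]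
        have h1 : i - (n : ZMod ℓ) - 1 = i - ((n + 1 : ℕ) : ZMod ℓ) := by push_cast; ring
        rw [h1]
        push_cast
        ring
  have hσℓ : ∀ w, (σ ^ ℓ) w = w := by
    intro w; ext i
    rw [hpow]
    simp [ZMod.natCast_self]
  have hfinv : ∀ w, f (σ w) = f w := by
    intro w
    show (∏ i : ZMod ℓ, c (i + σ w i)) = ∏ i : ZMod ℓ, c (i + w i)
    refine Fintype.prod_equiv (Equiv.addRight (-1 : ZMod ℓ))
      (fun i => c (i + σ w i)) (fun i => c (i + w i)) ?_
    intro i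
    rw [hσapp]
    simp only [Equiv.coe_addRight]
    rw [show i + (-1 : ZMod ℓ) = i - 1 from (sub_eq_add_neg i 1).symm]
    congr 1
    ring
  -- fixed points
  set negAdd : ZMod ℓ → Equiv.Perm (ZMod ℓ) :=
    fun k => (Equiv.neg (ZMod ℓ)).trans (Equiv.addLeft k) with hnegAdd
  have hnegAddApp : ∀ k i, negAdd k i = k + -i := by intro k i; simp [hnegAdd]
  have hfixed : Finset.univ.filter (fun w => σ w = w) =
      Finset.image negAdd Finset.univ := by
    ext w
    simp only [Finset.mem_filter, Finset.mem_univ, true_and, Finset.mem_image]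
    constructor
    · intro hw
      have h : ∀ i, w (i - 1) - 1 = w i := by
        intro i; rw [← hσapp, hw]
      have hnat : ∀ n : ℕ, w (n : ZMod ℓ) = w 0 - n := by
        intro n
        induction n with
        | zero => simp
        | succ n IH =>
            have := h ((n : ZMod ℓ) + 1)
            rw [show ((n : ZMod ℓ) + 1) - 1 = (n : ZMod ℓ) by ring, IH] at this
            rw [show (((n + 1 : ℕ)) : ZMod ℓ) = (n : ZMod ℓ) + 1 by push_cast; ring, ← this]
            push_cast
            ring
      refine ⟨w 0, ?_⟩
      ext i
      rw [hnegAddApp]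
      have hv : ((i.val : ℕ) : ZMod ℓ) = i := ZMod.natCast_rightInverse i
      conv_rhs => rw [← hv]
      rw [hnat]
      ring_nf
      rw [hv]
    · rintro ⟨k, -, rfl⟩
      ext i
      rw [hσapp, hnegAddApp, hnegAddApp]
      ring
  have hnegAddInj : Function.Injective negAdd := by
    intro k₁ k₂ h
    have := congrArg (fun w : Equiv.Perm (ZMod ℓ) => w 0) h
    simpa [hnegAddApp] using this
  have hfixedsum : ∑ w ∈ Finset.univ.filter (fun w => σ w = w), f w
      = ∑ k : ZMod ℓ, c k ^ ℓ := by
    rw [hfixed, Finset.sum_image (fun a _ b _ h => hnegAddInj h)]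
    refine Finset.sum_congr rfl ?_
    intro k _
    show (∏ i : ZMod ℓ, c (i + negAdd k i)) = c k ^ ℓ
    rw [show (fun i : ZMod ℓ => c (i + negAdd k i)) = fun _ => c k by
        funext i; rw [hnegAddApp]; congr 1; ring]
    rw [Finset.prod_const, Finset.card_univ, ZMod.card]
  -- apply the orbit lemma to the non-fixed part
  have hrest : ∑ w ∈ Finset.univ.filter (fun w => ¬ σ w = w), f w
      ∈ Ideal.span {(ℓ : R)} := by
    refine aux_orbit hℓ σ hσℓ f hfinv _ ?_ ?_
    · intro w hw
      simp only [Finset.mem_filter, Finset.mem_univ, true_and] at hw ⊢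
      intro h
      exact hw (σ.injective h)
    · intro w hw
      simp only [Finset.mem_filter, Finset.mem_univ, true_and] at hw
      exact hw
  have hsplit := Finset.sum_filter_add_sum_filter_not Finset.univ
    (fun w : Equiv.Perm (ZMod ℓ) => σ w = w) f
  have : (∑ w : Equiv.Perm (ZMod ℓ), f w) - (∑ k : ZMod ℓ, c k ^ ℓ)
      = ∑ w ∈ Finset.univ.filter (fun w => ¬ σ w = w), f w := by
    rw [← hfixedsum, ← hsplit]
    ring
  rw [show (∑ w : Equiv.Perm (ZMod ℓ), ∏ i : ZMod ℓ, c (i + w i))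
      = ∑ w : Equiv.Perm (ZMod ℓ), f w from rfl, this]
  exact hrest
end

section
/- Let G be a finite group with an automorphism σ of prime order ℓ, let Γ = ⟨σ⟩, let H ≤ G be a σ-stable subgroup, and let V be a module for H ⋊ Γ over a commutative ring R in which ℓ is invertible or not—no invertibility needed. Suppose the natural map G^σ/H^σ → (G/H)^σ is a bijection. Then for i ∈ {0,1}, restriction of functions from G to G^σ induces an isomorphism of R[G^σ]-modules Ĥ^i(Γ, Ind_H^G V) ≅ Ind_{H^σ}^{G^σ} (Ĥ^i(Γ, V)), where Γ acts on Ind_H^G V by (σ·f)(g) = σ(f(σ^{-1}(g))). -/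
namespace Stmt11

variable {G : Type*} [Group G]

lemma pow_memH (σG : MulAut G) (H : Subgroup G) (hH : ∀ g ∈ H, σG g ∈ H) :
    ∀ (n : ℕ) (a : G), a ∈ H → (σG ^ n) a ∈ H := by
  intro n
  induction n with
  | zero => intro a ha; simpa using ha
  | succ n ih =>
    intro a ha
    have : (σG ^ (n + 1)) a = (σG ^ n) (σG a) := by
      rw [pow_succ]; rfl
    rw [this]
    exact ih _ (hH a ha)

lemma memH_iff {ℓ : ℕ} (hℓ : ℓ.Prime) (σG : MulAut G) (hσG : σG ^ ℓ = 1)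
    (H : Subgroup G) (hH : ∀ g ∈ H, σG g ∈ H) (g : G) : σG g ∈ H ↔ g ∈ H := by
  constructor
  · intro h
    have h2 := pow_memH σG H hH (ℓ - 1) _ h
    have h3 : (σG ^ (ℓ - 1)) (σG g) = (σG ^ ℓ) g := by
      conv_rhs => rw [← Nat.succ_pred_eq_of_pos hℓ.pos]
      rw [pow_succ]; rfl
    rwa [h3, hσG, MulAut.one_apply] at h2
  · exact hH g

lemma invpow_memH {ℓ : ℕ} (hℓ : ℓ.Prime) (σG : MulAut G) (hσG : σG ^ ℓ = 1)
    (H : Subgroup G) (hH : ∀ g ∈ H, σG g ∈ H) :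
    ∀ (n : ℕ) (a : G), a ∈ H → ((σG⁻¹) ^ n) a ∈ H := by
  intro n
  induction n with
  | zero => intro a ha; simpa using ha
  | succ n ih =>
    intro a ha
    have : (σG⁻¹ ^ (n + 1)) a = (σG⁻¹ ^ n) (σG⁻¹ a) := by
      rw [pow_succ]; rfl
    rw [this]
    apply ih
    rw [← memH_iff hℓ σG hσG H hH]
    simpa using ha

-- coset fixedness invariances
lemma CF_mul (σG : MulAut G) (H : Subgroup G) (hH : ∀ g ∈ H, σG g ∈ H)
    {h : G} (hh : h ∈ H) (g : G) :
    σG (h * g) * (h * g)⁻¹ ∈ H ↔ σG g * g⁻¹ ∈ H := by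
  have key : σG (h * g) * (h * g)⁻¹ = σG h * (σG g * g⁻¹) * h⁻¹ := by
    simp [mul_assoc]
  rw [key]
  constructor
  · intro hx
    have : (σG h)⁻¹ * (σG h * (σG g * g⁻¹) * h⁻¹) * h ∈ H :=
      H.mul_mem (H.mul_mem (H.inv_mem (hH h hh)) hx) hh
    simpa [mul_assoc] using this
  · intro hx
    exact H.mul_mem (H.mul_mem (hH h hh) hx) (H.inv_mem hh)

lemma CF_inv {ℓ : ℕ} (hℓ : ℓ.Prime) (σG : MulAut G) (hσG : σG ^ ℓ = 1)
    (H : Subgroup G) (hH : ∀ g ∈ H, σG g ∈ H) (g : G) :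
    σG (σG⁻¹ g) * (σG⁻¹ g)⁻¹ ∈ H ↔ σG g * g⁻¹ ∈ H := by
  have key : σG (σG⁻¹ g) * (σG⁻¹ g)⁻¹ = σG⁻¹ (σG g * g⁻¹) := by
    simp
  rw [key]
  rw [← memH_iff hℓ σG hσG H hH]
  simp

lemma CF_invpow {ℓ : ℕ} (hℓ : ℓ.Prime) (σG : MulAut G) (hσG : σG ^ ℓ = 1)
    (H : Subgroup G) (hH : ∀ g ∈ H, σG g ∈ H) :
    ∀ (i : ℕ) (g : G),
      (σG ((σG⁻¹ ^ i) g) * ((σG⁻¹ ^ i) g)⁻¹ ∈ H ↔ σG g * g⁻¹ ∈ H) := by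
  intro i
  induction i with
  | zero => intro g; simp
  | succ i ih =>
    intro g
    have h1 : (σG⁻¹ ^ (i + 1)) g = (σG⁻¹ ^ i) (σG⁻¹ g) := by
      rw [pow_succ]; rfl
    rw [h1, ih (σG⁻¹ g), CF_inv hℓ σG hσG H hH]

-- fixed point lemmas
lemma fix_inv (σG : MulAut G) {g : G} (hg : σG g = g) : σG⁻¹ g = g := by
  conv_lhs => rw [← hg]
  simp

lemma fix_pow (σG : MulAut G) {g : G} (hg : σG g = g) : ∀ i : ℕ, (σG ^ i) g = g := by
  intro i
  induction i with
  | zero => simp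
  | succ i ih =>
    have : (σG ^ (i + 1)) g = (σG ^ i) (σG g) := by rw [pow_succ]; rfl
    rw [this, hg, ih]

lemma fix_invpow (σG : MulAut G) {g : G} (hg : σG g = g) : ∀ i : ℕ, (σG⁻¹ ^ i) g = g := by
  intro i
  induction i with
  | zero => simp
  | succ i ih =>
    have : (σG⁻¹ ^ (i + 1)) g = (σG⁻¹ ^ i) (σG⁻¹ g) := by rw [pow_succ]; rfl
    rw [this, fix_inv σG hg, ih]

lemma pow_invpow (σG : MulAut G) (i : ℕ) (g : G) : (σG ^ i) ((σG⁻¹ ^ i) g) = g := by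
  rw [inv_pow]
  simp

lemma commL (σG : MulAut G) (H : Subgroup G) (hH : ∀ g ∈ H, σG g ∈ H)
    {R V : Type*} [CommRing R] [AddCommGroup V] [Module R V]
    (ρ : Representation R H V) (σV : Module.End R V)
    (hcompat : ∀ (h : H) (v : V),
      σV (ρ h v) = ρ (⟨σG (h : G), hH _ h.2⟩ : H) (σV v)) :
    ∀ (n : ℕ) (a : G) (ha : a ∈ H) (v : V),
      (σV ^ n) (ρ ⟨a, ha⟩ v)
        = ρ ⟨(σG ^ n) a, pow_memH σG H hH n a ha⟩ ((σV ^ n) v) := by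
  intro n
  induction n with
  | zero =>
    intro a ha v
    have h1 : (⟨(σG ^ 0) a, pow_memH σG H hH 0 a ha⟩ : H) = ⟨a, ha⟩ :=
      Subtype.ext (by simp)
    rw [h1]
    simp
  | succ n ih =>
    intro a ha v
    have e1 : (σV ^ (n + 1)) (ρ ⟨a, ha⟩ v) = σV ((σV ^ n) (ρ ⟨a, ha⟩ v)) := by
      rw [pow_succ']; rfl
    rw [e1, ih a ha v, hcompat]
    have e2 : (σV ^ (n + 1)) v = σV ((σV ^ n) v) := by rw [pow_succ']; rfl
    rw [e2]
    congr 1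
    exact congrArg ρ (Subtype.ext (by
      show σG ((σG ^ n) a) = (σG ^ (n + 1)) a
      rw [pow_succ']; rfl))

lemma normfix {R V : Type*} [CommRing R] [AddCommGroup V] [Module R V]
    (σG : MulAut G) (σV : Module.End R V) (f : G → V)
    (hfix : ∀ g : G, σV (f (σG⁻¹ g)) = f g) :
    ∀ (i : ℕ) (g : G), (σV ^ i) (f ((σG⁻¹ ^ i) g)) = f g := by
  intro i
  induction i with
  | zero => intro g; simp
  | succ i ih =>
    intro g
    have e1 : (σG⁻¹ ^ (i + 1)) g = σG⁻¹ ((σG⁻¹ ^ i) g) := by rw [pow_succ']; rfl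
    have e2 : ∀ w, (σV ^ (i + 1)) w = (σV ^ i) (σV w) := by
      intro w; rw [pow_succ]; rfl
    rw [e1, e2, hfix ((σG⁻¹ ^ i) g), ih]

lemma setup {ℓ : ℕ} (hℓ : ℓ.Prime) (σG : MulAut G) (hσG : σG ^ ℓ = 1)
    (H : Subgroup G) (hH : ∀ g ∈ H, σG g ∈ H)
    (hcoset : ∀ g : G, σG g * g⁻¹ ∈ H →
      ∃ h g₀ : G, h ∈ H ∧ σG g₀ = g₀ ∧ g = h * g₀) :
    ∃ (rep : G → G) (isel : G → ℕ),
      (∀ g, σG g * g⁻¹ ∈ H → σG (rep g) = rep g) ∧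
      (∀ g, σG g * g⁻¹ ∈ H → g * (rep g)⁻¹ ∈ H) ∧
      (∀ h g : G, h ∈ H → rep (h * g) = rep g) ∧
      (∀ g, σG g * g⁻¹ ∈ H → rep (σG⁻¹ g) = rep g) ∧
      (∀ g, isel g < ℓ) ∧
      (∀ h g : G, h ∈ H → isel (h * g) = isel g) ∧
      (∀ g, ¬(σG g * g⁻¹ ∈ H) → isel g ≠ 0 → isel (σG⁻¹ g) = isel g - 1) ∧
      (∀ g, ¬(σG g * g⁻¹ ∈ H) → isel g = 0 → isel (σG⁻¹ g) = ℓ - 1) ∧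
      (∀ g, ¬(σG g * g⁻¹ ∈ H) → ∀ i < ℓ,
        (isel ((σG⁻¹ ^ i) g) = 0 ↔ i = isel g)) := by
  classical
  set s := QuotientGroup.rightRel H with hs
  let mk : G → Quotient s := Quotient.mk s
  have mk_iff : ∀ x y : G, mk x = mk y ↔ y * x⁻¹ ∈ H := by
    intro x y
    rw [Quotient.eq]
    exact QuotientGroup.rightRel_apply
  let σQ : Quotient s → Quotient s :=
    Quotient.map' σG (by
      intro x y hxy
      rw [QuotientGroup.rightRel_apply] at hxy ⊢
      have : σG (y * x⁻¹) ∈ H := hH _ hxy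
      simpa using this)
  have σQ_mk : ∀ g : G, σQ (mk g) = mk (σG g) := fun g => rfl
  have σQ_inj : Function.Injective σQ := by
    intro a b
    induction a using Quotient.ind with | _ x =>
    induction b using Quotient.ind with | _ y =>
    intro hab
    have hab' : mk (σG x) = mk (σG y) := hab
    rw [mk_iff] at hab'
    have : σG (y * x⁻¹) ∈ H := by simpa using hab'
    rw [memH_iff hℓ σG hσG H hH] at this
    exact (mk_iff x y).2 this
  have σQ_iter : ∀ (i : ℕ) (g : G), σQ^[i] (mk g) = mk ((σG ^ i) g) := by
    intro i
    induction i with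
    | zero => intro g; simp
    | succ i ih =>
      intro g
      rw [Function.iterate_succ_apply, σQ_mk, ih]
      have : (σG ^ (i + 1)) g = (σG ^ i) (σG g) := by rw [pow_succ]; rfl
      rw [this]
  have σQ_l : ∀ q : Quotient s, σQ^[ℓ] q = q := by
    intro q
    induction q using Quotient.ind with | _ x =>
    show σQ^[ℓ] (mk x) = mk x
    rw [σQ_iter, hσG]; rfl
  -- orbit setoid
  let t : Setoid (Quotient s) :=
    ⟨fun a b => ∃ i : ℕ, σQ^[i] a = b, by
      constructor
      · intro a; exact ⟨0, rfl⟩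
      · rintro a b ⟨i, hi⟩
        refine ⟨i * (ℓ - 1), ?_⟩
        rw [← hi, ← Function.iterate_add_apply]
        have : i * (ℓ - 1) + i = ℓ * i := by
          have h1 : ℓ - 1 + 1 = ℓ := Nat.succ_pred_eq_of_pos hℓ.pos
          calc i * (ℓ - 1) + i = i * (ℓ - 1 + 1) := by rw [Nat.mul_succ]
          _ = ℓ * i := by rw [h1, Nat.mul_comm]
        rw [this, Function.iterate_mul]
        exact Function.iterate_fixed (σQ_l a) i
      · rintro a b c ⟨i, hi⟩ ⟨j, hj⟩
        exact ⟨j + i, by rw [Function.iterate_add_apply, hi, hj]⟩⟩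
  have t_r : ∀ a b : Quotient s, (t.r a b ↔ ∃ i : ℕ, σQ^[i] a = b) := fun a b => Iff.rfl
  let rep2 : Quotient s → Quotient s := fun q => (Quotient.mk t q).out
  have h_rep2_orb : ∀ q, ∃ i : ℕ, σQ^[i] (rep2 q) = q := by
    intro q
    exact Quotient.mk_out (s := t) q
  have h_rep2_σ : ∀ q, rep2 (σQ q) = rep2 q := by
    intro q
    show (Quotient.mk t (σQ q)).out = (Quotient.mk t q).out
    congr 1
    apply Quotient.sound
    show t.r (σQ q) q
    refine ⟨ℓ - 1, ?_⟩
    have hpos := hℓ.pos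
    have hl : ℓ - 1 + 1 = ℓ := by omega
    have h1 : σQ^[ℓ - 1] (σQ q) = σQ^[ℓ - 1 + 1] q :=
      (Function.iterate_succ_apply σQ (ℓ - 1) q).symm
    rw [h1, hl]
    exact σQ_l q
  have h_rep2_iter : ∀ (i : ℕ) (q), rep2 (σQ^[i] q) = rep2 q := by
    intro i
    induction i with
    | zero => intro q; rfl
    | succ i ih =>
      intro q
      rw [Function.iterate_succ_apply, ih, h_rep2_σ]
  -- no small period for non-fixed
  have no_period : ∀ q : Quotient s, σQ q ≠ q → ∀ d : ℕ, d < ℓ → σQ^[d] q = q → d = 0 := by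
    intro q hq d hd hdq
    by_contra hd0
    have hdvd : ¬ ℓ ∣ d := by
      intro hdvd
      exact hd0 (Nat.eq_zero_of_dvd_of_lt hdvd hd)
    have hcop : Nat.Coprime d ℓ := ((Nat.Prime.coprime_iff_not_dvd hℓ).2 hdvd).symm
    obtain ⟨a, -, ha⟩ := Nat.exists_mul_mod_eq_one_of_coprime hcop hℓ.one_lt
    have key : d * a = ℓ * (d * a / ℓ) + 1 := by
      conv_lhs => rw [← Nat.div_add_mod (d * a) ℓ]
      rw [ha]
    have h1 : σQ^[d * a] q = q := by
      rw [Function.iterate_mul]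
      exact Function.iterate_fixed hdq a
    have h2 : σQ^[d * a] q = σQ q := by
      rw [key, Function.iterate_add_apply, Function.iterate_mul]
      exact Function.iterate_fixed (σQ_l (σQ^[1] q)) _
    exact hq (h2 ▸ h1)
  -- fixedness at quotient level
  have Fx_iff : ∀ g : G, (σQ (mk g) = mk g ↔ σG g * g⁻¹ ∈ H) := by
    intro g
    rw [σQ_mk, mk_iff]
    constructor
    · intro h1
      have := H.inv_mem h1
      simpa using this
    · intro h1
      have := H.inv_mem h1
      simpa using this
  -- fixed coset representative
  have hCF_out : ∀ g : G, σG g * g⁻¹ ∈ H → σG (mk g).out * (mk g).out⁻¹ ∈ H := by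
    intro g hg
    have h1 : mk ((mk g).out) = mk g := Quotient.out_eq _
    rw [mk_iff] at h1
    have h2 : (mk g).out = (g * (mk g).out⁻¹)⁻¹ * g := by group
    rw [h2]
    rw [CF_mul σG H hH (H.inv_mem h1) g]
    exact hg
  let repQ : Quotient s → G := fun q =>
    if hq : σG q.out * q.out⁻¹ ∈ H then ((hcoset q.out hq).choose_spec).choose else 1
  have hrep_spec : ∀ g : G, ∀ hg : σG g * g⁻¹ ∈ H,
      σG (repQ (mk g)) = repQ (mk g) ∧ g * (repQ (mk g))⁻¹ ∈ H := by
    intro g hg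
    have hq : σG (mk g).out * (mk g).out⁻¹ ∈ H := hCF_out g hg
    have hrepeq : repQ (mk g) = ((hcoset (mk g).out hq).choose_spec).choose := by
      show (if hq' : σG (mk g).out * (mk g).out⁻¹ ∈ H then
        ((hcoset (mk g).out hq').choose_spec).choose else 1) = _
      rw [dif_pos hq]
    obtain ⟨hmem, hfix0, hout⟩ := ((hcoset (mk g).out hq).choose_spec).choose_spec
    set h' := (hcoset (mk g).out hq).choose with hh'
    set g₀ := ((hcoset (mk g).out hq).choose_spec).choose with hg₀
    refine ⟨by rw [hrepeq]; exact hfix0, ?_⟩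
    rw [hrepeq, ← mk_iff]
    have h1 : mk g₀ = mk ((mk g).out) := by
      rw [mk_iff, hout, mul_inv_cancel_right]
      exact hmem
    rw [h1]
    exact Quotient.out_eq _
  -- index existence
  have h_idx_ex : ∀ q : Quotient s, ∃ i, i < ℓ ∧ σQ^[i] (rep2 q) = q := by
    intro q
    obtain ⟨i, hi⟩ := h_rep2_orb q
    refine ⟨i % ℓ, Nat.mod_lt _ hℓ.pos, ?_⟩
    have h2 : σQ^[ℓ * (i / ℓ) + i % ℓ] (rep2 q) = q := by rw [Nat.div_add_mod]; exact hi
    rw [Function.iterate_add_apply, Function.iterate_mul] at h2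
    rwa [Function.iterate_fixed (σQ_l _) (i / ℓ)] at h2
  let idxQ : Quotient s → ℕ := fun q => (h_idx_ex q).choose
  have hidx_lt : ∀ q, idxQ q < ℓ := fun q => (h_idx_ex q).choose_spec.1
  have hidx_eq : ∀ q, σQ^[idxQ q] (rep2 q) = q := fun q => (h_idx_ex q).choose_spec.2
  have haux : ∀ q : Quotient s, σQ q ≠ q → ∀ i j, i ≤ j → j < ℓ →
      σQ^[i] (rep2 q) = q → σQ^[j] (rep2 q) = q → i = j := by
    intro q hq i j hij hj hi2 hj2
    set d := j - i with hd
    have hdj : j = i + d := by omega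
    have h3 : σQ^[i] (σQ^[d] (rep2 q)) = σQ^[i] (rep2 q) := by
      rw [← Function.iterate_add_apply, ← hdj, hj2, hi2]
    have h4 : σQ^[d] (rep2 q) = rep2 q := (σQ_inj.iterate i) h3
    have h5 : σQ^[d] q = q := by
      calc σQ^[d] q = σQ^[d] (σQ^[i] (rep2 q)) := by rw [hi2]
      _ = σQ^[d + i] (rep2 q) := (Function.iterate_add_apply σQ d i _).symm
      _ = σQ^[i + d] (rep2 q) := by rw [Nat.add_comm]
      _ = σQ^[i] (σQ^[d] (rep2 q)) := Function.iterate_add_apply σQ i d _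
      _ = q := by rw [h4, hi2]
    have hd0 : d = 0 := no_period q hq d (by omega) h5
    omega
  have hidx_unique : ∀ q : Quotient s, σQ q ≠ q → ∀ i, i < ℓ →
      σQ^[i] (rep2 q) = q → i = idxQ q := by
    intro q hq i hi hiq
    rcases Nat.le_total i (idxQ q) with h | h
    · exact haux q hq i (idxQ q) h (hidx_lt q) hiq (hidx_eq q)
    · exact (haux q hq (idxQ q) i h hi (hidx_eq q) hiq).symm
  -- coset equalities
  have mk_mul : ∀ (h g : G), h ∈ H → mk (h * g) = mk g := by
    intro h g hh
    rw [mk_iff]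
    have : g * (h * g)⁻¹ = h⁻¹ := by group
    rw [this]
    exact H.inv_mem hh
  have σQ_mkinv : ∀ g : G, σQ (mk (σG⁻¹ g)) = mk g := by
    intro g
    rw [σQ_mk]
    congr 1
    simp
  have mkinv_fix : ∀ g : G, σG g * g⁻¹ ∈ H → mk (σG⁻¹ g) = mk g := by
    intro g hg
    apply σQ_inj
    rw [σQ_mkinv, (Fx_iff g).2 hg]
  have nonfix_inv : ∀ g : G, ¬ σG g * g⁻¹ ∈ H → σQ (mk (σG⁻¹ g)) ≠ mk (σG⁻¹ g) := by
    intro g hg hcontra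
    have h1 : mk (σG⁻¹ g) = mk g := by rw [← σQ_mkinv g, hcontra]
    rw [h1] at hcontra
    exact hg ((Fx_iff g).1 hcontra)
  refine ⟨fun g => repQ (mk g), fun g => idxQ (mk g), ?_, ?_, ?_, ?_, ?_, ?_, ?_, ?_, ?_⟩
  · exact fun g hg => (hrep_spec g hg).1
  · exact fun g hg => (hrep_spec g hg).2
  · intro h g hh
    dsimp only
    rw [mk_mul h g hh]
  · intro g hg
    dsimp only
    rw [mkinv_fix g hg]
  · exact fun g => hidx_lt (mk g)
  · intro h g hh
    dsimp only
    rw [mk_mul h g hh]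
  -- step down
  · intro g hg hne
    dsimp only at hne ⊢
    have hq : σQ (mk g) ≠ mk g := fun h => hg ((Fx_iff g).1 h)
    have hq' : σQ (mk (σG⁻¹ g)) ≠ mk (σG⁻¹ g) := nonfix_inv g hg
    have hrr : rep2 (mk (σG⁻¹ g)) = rep2 (mk g) := by
      rw [← σQ_mkinv g, h_rep2_σ]
    have hstep : σQ^[idxQ (mk g) - 1] (rep2 (mk (σG⁻¹ g))) = mk (σG⁻¹ g) := by
      apply σQ_inj
      rw [σQ_mkinv g, hrr]
      have h6 : σQ (σQ^[idxQ (mk g) - 1] (rep2 (mk g)))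
          = σQ^[idxQ (mk g) - 1 + 1] (rep2 (mk g)) :=
        (Function.iterate_succ_apply' σQ _ _).symm
      rw [h6, show idxQ (mk g) - 1 + 1 = idxQ (mk g) by omega]
      exact hidx_eq (mk g)
    have := hidx_unique (mk (σG⁻¹ g)) hq' (idxQ (mk g) - 1)
      (by have := hidx_lt (mk g); omega) hstep
    omega
  -- step from 0 to ℓ - 1
  · intro g hg h0
    dsimp only at h0 ⊢
    have hq' : σQ (mk (σG⁻¹ g)) ≠ mk (σG⁻¹ g) := nonfix_inv g hg
    have hrr : rep2 (mk (σG⁻¹ g)) = rep2 (mk g) := by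
      rw [← σQ_mkinv g, h_rep2_σ]
    have hrepq : rep2 (mk g) = mk g := by
      have := hidx_eq (mk g)
      rwa [h0, Function.iterate_zero_apply] at this
    have hstep : σQ^[ℓ - 1] (rep2 (mk (σG⁻¹ g))) = mk (σG⁻¹ g) := by
      apply σQ_inj
      rw [σQ_mkinv g, hrr, hrepq]
      have h6 : σQ (σQ^[ℓ - 1] (mk g)) = σQ^[ℓ - 1 + 1] (mk g) :=
        (Function.iterate_succ_apply' σQ _ _).symm
      rw [h6, show ℓ - 1 + 1 = ℓ from by have := hℓ.pos; omega]
      exact σQ_l (mk g)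
    have := hidx_unique (mk (σG⁻¹ g)) hq' (ℓ - 1)
      (by have := hℓ.pos; omega) hstep
    omega
  -- characterization
  · intro g hg i hi
    dsimp only
    have hq : σQ (mk g) ≠ mk g := fun h => hg ((Fx_iff g).1 h)
    have hqi : σQ^[i] (mk ((σG⁻¹ ^ i) g)) = mk g := by
      rw [σQ_iter]
      congr 1
      exact pow_invpow σG i g
    have hrr : rep2 (mk ((σG⁻¹ ^ i) g)) = rep2 (mk g) := by
      rw [← hqi, h_rep2_iter]
    have hqi_ne : σQ (mk ((σG⁻¹ ^ i) g)) ≠ mk ((σG⁻¹ ^ i) g) := by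
      intro hcontra
      apply hq
      rw [← hqi]
      calc σQ (σQ^[i] (mk ((σG⁻¹ ^ i) g)))
          = σQ^[i + 1] (mk ((σG⁻¹ ^ i) g)) := (Function.iterate_succ_apply' σQ _ _).symm
        _ = σQ^[i] (σQ (mk ((σG⁻¹ ^ i) g))) := Function.iterate_succ_apply σQ _ _
        _ = σQ^[i] (mk ((σG⁻¹ ^ i) g)) := by rw [hcontra]
    constructor
    · intro h0
      have hrepq : rep2 (mk ((σG⁻¹ ^ i) g)) = mk ((σG⁻¹ ^ i) g) := by
        have := hidx_eq (mk ((σG⁻¹ ^ i) g))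
        rwa [h0, Function.iterate_zero_apply] at this
      apply hidx_unique (mk g) hq i hi
      rw [← hrr, hrepq]
      exact hqi
    · intro hieq
      have h7 : σQ^[i] (rep2 (mk g)) = mk g := by
        rw [hieq]; exact hidx_eq (mk g)
      have h8 : rep2 (mk g) = mk ((σG⁻¹ ^ i) g) := by
        apply σQ_inj.iterate i
        rw [h7, hqi]
      have := hidx_unique (mk ((σG⁻¹ ^ i) g)) hqi_ne 0 hℓ.pos
        (by rw [Function.iterate_zero_apply, hrr, h8])
      omega


end Stmt11




/-- Tate cohomology of an induced representation (Mackey/Shapiro for fixed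
points): `G` a finite group with automorphism `σG` of prime order `ℓ`,
`H ≤ G` a `σ`-stable subgroup, `V` an `R`-module with compatible `H`- and
`Γ = ⟨σ⟩`-actions. Assume every `σ`-fixed coset in `H\G` contains a `σ`-fixed
element (i.e. `G^σ/H^σ ≃ (G/H)^σ`). Then restriction of functions to `G^σ`
induces, for `i ∈ {0,1}`, an isomorphism
`Ĥ^i(Γ, Ind_H^G V) ≅ Ind_{H^σ}^{G^σ} Ĥ^i(Γ, V)`, stated elementwise:
the induced map on classes is well-defined and injective (the two `↔` clauses)
and surjective (the two `∃` clauses). Here `Ind_H^G V` is the set of `f : G → V`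
with `f (h g) = h · f g`, `Γ` acting by `(σ · f) g = σV (f (σG⁻¹ g))`. -/
theorem stmt_11 (ℓ : ℕ) (hℓ : ℓ.Prime)
    {G : Type*} [Group G] [Finite G] (σG : MulAut G) (hσG : σG ^ ℓ = 1)
    (H : Subgroup G) (hH : ∀ g ∈ H, σG g ∈ H)
    {R V : Type*} [CommRing R] [AddCommGroup V] [Module R V]
    (ρ : Representation R H V)
    (σV : Module.End R V) (hσV : σV ^ ℓ = 1)
    (hcompat : ∀ (h : H) (v : V),
      σV (ρ h v) = ρ (⟨σG (h : G), hH _ h.2⟩ : H) (σV v))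
    (hcoset : ∀ g : G, σG g * g⁻¹ ∈ H →
      ∃ (h g₀ : G), h ∈ H ∧ σG g₀ = g₀ ∧ g = h * g₀) :
    -- i = 0: injectivity (a class restricts to zero iff it is zero)
    (∀ f : G → V, (∀ (h : H) (g : G), f ((h : G) * g) = ρ h (f g)) →
      (∀ g : G, σV (f (σG⁻¹ g)) = f g) →
      ((∃ f' : G → V, (∀ (h : H) (g : G), f' ((h : G) * g) = ρ h (f' g)) ∧
          ∀ g : G, (∑ i ∈ Finset.range ℓ, (σV ^ i) (f' ((σG⁻¹ ^ i) g))) = f g) ↔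
        ∀ g : G, σG g = g → ∃ v : V, (∑ i ∈ Finset.range ℓ, σV ^ i) v = f g)) ∧
    -- i = 0: surjectivity onto Ind_{H^σ}^{G^σ} Ĥ⁰(Γ, V)
    (∀ φ : G → V, (∀ g : G, σG g = g → σV (φ g) = φ g) →
      (∀ (h : H) (g : G), σG (h : G) = (h : G) → σG g = g →
        ∃ v : V, φ ((h : G) * g) - ρ h (φ g) = (∑ i ∈ Finset.range ℓ, σV ^ i) v) →
      ∃ f : G → V, (∀ (h : H) (g : G), f ((h : G) * g) = ρ h (f g)) ∧
        (∀ g : G, σV (f (σG⁻¹ g)) = f g) ∧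
        ∀ g : G, σG g = g →
          ∃ v : V, f g - φ g = (∑ i ∈ Finset.range ℓ, σV ^ i) v) ∧
    -- i = 1: injectivity
    (∀ f : G → V, (∀ (h : H) (g : G), f ((h : G) * g) = ρ h (f g)) →
      (∀ g : G, (∑ i ∈ Finset.range ℓ, (σV ^ i) (f ((σG⁻¹ ^ i) g))) = 0) →
      ((∃ f' : G → V, (∀ (h : H) (g : G), f' ((h : G) * g) = ρ h (f' g)) ∧
          ∀ g : G, f' g - σV (f' (σG⁻¹ g)) = f g) ↔
        ∀ g : G, σG g = g → ∃ v : V, v - σV v = f g)) ∧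
    -- i = 1: surjectivity onto Ind_{H^σ}^{G^σ} Ĥ¹(Γ, V)
    (∀ φ : G → V,
      (∀ g : G, σG g = g → (∑ i ∈ Finset.range ℓ, σV ^ i) (φ g) = 0) →
      (∀ (h : H) (g : G), σG (h : G) = (h : G) → σG g = g →
        ∃ v : V, φ ((h : G) * g) - ρ h (φ g) = v - σV v) →
      ∃ f : G → V, (∀ (h : H) (g : G), f ((h : G) * g) = ρ h (f g)) ∧
        (∀ g : G, (∑ i ∈ Finset.range ℓ, (σV ^ i) (f ((σG⁻¹ ^ i) g))) = 0) ∧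
        ∀ g : G, σG g = g → ∃ v : V, f g - φ g = v - σV v) := by
  classical
  obtain ⟨rep, isel, hR1, hR2, hR3, hR4, hI1, hI2, hI3a, hI3b, hI4⟩ :=
    Stmt11.setup hℓ σG hσG H hH hcoset
  have hsum : ∀ v : V, (∑ i ∈ Finset.range ℓ, σV ^ i) v
      = ∑ i ∈ Finset.range ℓ, (σV ^ i) v := fun v => LinearMap.sum_apply _ _ v
  have hR4pow : ∀ (i : ℕ) (g : G), σG g * g⁻¹ ∈ H → rep ((σG⁻¹ ^ i) g) = rep g := by
    intro i
    induction i with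
    | zero => intro g _; simp
    | succ i ih =>
      intro g hg
      have e1 : (σG⁻¹ ^ (i + 1)) g = σG⁻¹ ((σG⁻¹ ^ i) g) := by rw [pow_succ']; rfl
      have hci : σG ((σG⁻¹ ^ i) g) * ((σG⁻¹ ^ i) g)⁻¹ ∈ H :=
        (Stmt11.CF_invpow hℓ σG hσG H hH i g).2 hg
      rw [e1, hR4 _ hci, ih g hg]
  have hfixCF : ∀ g : G, σG g = g → σG g * g⁻¹ ∈ H := by
    intro g hg
    rw [hg, mul_inv_cancel]
    exact H.one_mem
  refine ⟨?_, ?_, ?_, ?_⟩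
  -- Part 1
  · intro f hf hfix
    have hf' : ∀ (a : G) (ha : a ∈ H) (x : G), f (a * x) = ρ ⟨a, ha⟩ (f x) :=
      fun a ha x => hf ⟨a, ha⟩ x
    constructor
    · rintro ⟨f', hf', hNf'⟩ g hgfix
      refine ⟨f' g, ?_⟩
      rw [hsum, ← hNf' g]
      apply Finset.sum_congr rfl
      intro i _
      rw [Stmt11.fix_invpow σG hgfix i]
    · intro hv
      set w : G → V := fun x => if hx : σG x = x then (hv x hx).choose else 0 with hw
      have hwspec : ∀ (x : G) (hx : σG x = x),
          (∑ i ∈ Finset.range ℓ, σV ^ i) (w x) = f x := by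
        intro x hx
        rw [hw]
        dsimp only
        rw [dif_pos hx]
        exact (hv x hx).choose_spec
      set F : G → V := fun x =>
        if hx : σG x * x⁻¹ ∈ H then ρ ⟨x * (rep x)⁻¹, hR2 x hx⟩ (w (rep x))
        else if isel x = 0 then f x else 0 with hF
      have hFpos : ∀ (x : G) (hx : σG x * x⁻¹ ∈ H),
          F x = ρ ⟨x * (rep x)⁻¹, hR2 x hx⟩ (w (rep x)) := by
        intro x hx
        rw [hF]
        dsimp only
        rw [dif_pos hx]
      have hFneg : ∀ (x : G), ¬(σG x * x⁻¹ ∈ H) →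
          F x = if isel x = 0 then f x else 0 := by
        intro x hx
        rw [hF]
        dsimp only
        rw [dif_neg hx]
      refine ⟨F, ?_, ?_⟩
      · intro h g
        by_cases hg : σG g * g⁻¹ ∈ H
        · have hhg : σG ((h : G) * g) * ((h : G) * g)⁻¹ ∈ H :=
            (Stmt11.CF_mul σG H hH h.2 g).2 hg
          rw [hFpos _ hhg, hFpos _ hg]
          have he : (⟨(h : G) * g * (rep ((h : G) * g))⁻¹, hR2 _ hhg⟩ : H)
              = h * ⟨g * (rep g)⁻¹, hR2 g hg⟩ := by
            apply Subtype.ext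
            show (h : G) * g * (rep ((h : G) * g))⁻¹ = (h : G) * (g * (rep g)⁻¹)
            rw [hR3 _ _ h.2, mul_assoc]
          have hwe : w (rep ((h : G) * g)) = w (rep g) := by rw [hR3 _ _ h.2]
          rw [he, hwe, map_mul, Module.End.mul_apply]
        · have hhg : ¬(σG ((h : G) * g) * ((h : G) * g)⁻¹ ∈ H) :=
            fun c => hg ((Stmt11.CF_mul σG H hH h.2 g).1 c)
          rw [hFneg _ hhg, hFneg _ hg, hI2 _ _ h.2]
          by_cases h0 : isel g = 0
          · rw [if_pos h0, if_pos h0]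
            exact hf h g
          · rw [if_neg h0, if_neg h0, map_zero]
      · intro g
        by_cases hg : σG g * g⁻¹ ∈ H
        · have hterm : ∀ i ∈ Finset.range ℓ, (σV ^ i) (F ((σG⁻¹ ^ i) g))
              = ρ ⟨g * (rep g)⁻¹, hR2 g hg⟩ ((σV ^ i) (w (rep g))) := by
            intro i _
            have hci : σG ((σG⁻¹ ^ i) g) * ((σG⁻¹ ^ i) g)⁻¹ ∈ H :=
              (Stmt11.CF_invpow hℓ σG hσG H hH i g).2 hg
            rw [hFpos _ hci]
            have pf' : (σG⁻¹ ^ i) g * (rep g)⁻¹ ∈ H := by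
              have := hR2 _ hci
              rwa [hR4pow i g hg] at this
            have he : (⟨(σG⁻¹ ^ i) g * (rep ((σG⁻¹ ^ i) g))⁻¹, hR2 _ hci⟩ : H)
                = ⟨(σG⁻¹ ^ i) g * (rep g)⁻¹, pf'⟩ := by
              apply Subtype.ext
              show (σG⁻¹ ^ i) g * (rep ((σG⁻¹ ^ i) g))⁻¹ = (σG⁻¹ ^ i) g * (rep g)⁻¹
              rw [hR4pow i g hg]
            have hwe : w (rep ((σG⁻¹ ^ i) g)) = w (rep g) := by rw [hR4pow i g hg]
            rw [he, hwe, Stmt11.commL σG H hH ρ σV hcompat i]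
            congr 1
            apply congrArg ρ
            apply Subtype.ext
            show (σG ^ i) ((σG⁻¹ ^ i) g * (rep g)⁻¹) = g * (rep g)⁻¹
            rw [map_mul, map_inv, Stmt11.pow_invpow, Stmt11.fix_pow σG (hR1 g hg) i]
          rw [Finset.sum_congr rfl hterm, ← map_sum, ← hsum,
            hwspec (rep g) (hR1 g hg), ← hf' _ (hR2 g hg) (rep g),
            inv_mul_cancel_right]
        · have hterm0 : ∀ i ∈ Finset.range ℓ, i ≠ isel g →
              (σV ^ i) (F ((σG⁻¹ ^ i) g)) = 0 := by
            intro i hi hne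
            have hci : ¬(σG ((σG⁻¹ ^ i) g) * ((σG⁻¹ ^ i) g)⁻¹ ∈ H) :=
              fun c => hg ((Stmt11.CF_invpow hℓ σG hσG H hH i g).1 c)
            rw [hFneg _ hci, if_neg, map_zero]
            intro h0
            exact hne ((hI4 g hg i (Finset.mem_range.1 hi)).1 h0)
          rw [Finset.sum_eq_single_of_mem (isel g) (Finset.mem_range.2 (hI1 g)) hterm0]
          have hci : ¬(σG ((σG⁻¹ ^ isel g) g) * ((σG⁻¹ ^ isel g) g)⁻¹ ∈ H) :=
            fun c => hg ((Stmt11.CF_invpow hℓ σG hσG H hH (isel g) g).1 c)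
          rw [hFneg _ hci, if_pos ((hI4 g hg (isel g) (hI1 g)).2 rfl)]
          exact Stmt11.normfix σG σV f hfix (isel g) g
  -- Part 2
  · intro φ hφ1 hφ2
    set F : G → V := fun x =>
      if hx : σG x * x⁻¹ ∈ H then ρ ⟨x * (rep x)⁻¹, hR2 x hx⟩ (φ (rep x))
      else 0 with hF
    have hFpos : ∀ (x : G) (hx : σG x * x⁻¹ ∈ H),
        F x = ρ ⟨x * (rep x)⁻¹, hR2 x hx⟩ (φ (rep x)) := by
      intro x hx
      rw [hF]
      dsimp only
      rw [dif_pos hx]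
    have hFneg : ∀ (x : G), ¬(σG x * x⁻¹ ∈ H) → F x = 0 := by
      intro x hx
      rw [hF]
      dsimp only
      rw [dif_neg hx]
    refine ⟨F, ?_, ?_, ?_⟩
    · intro h g
      by_cases hg : σG g * g⁻¹ ∈ H
      · have hhg : σG ((h : G) * g) * ((h : G) * g)⁻¹ ∈ H :=
          (Stmt11.CF_mul σG H hH h.2 g).2 hg
        rw [hFpos _ hhg, hFpos _ hg]
        have he : (⟨(h : G) * g * (rep ((h : G) * g))⁻¹, hR2 _ hhg⟩ : H)
            = h * ⟨g * (rep g)⁻¹, hR2 g hg⟩ := by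
          apply Subtype.ext
          show (h : G) * g * (rep ((h : G) * g))⁻¹ = (h : G) * (g * (rep g)⁻¹)
          rw [hR3 _ _ h.2, mul_assoc]
        have hwe : φ (rep ((h : G) * g)) = φ (rep g) := by rw [hR3 _ _ h.2]
        rw [he, hwe, map_mul, Module.End.mul_apply]
      · have hhg : ¬(σG ((h : G) * g) * ((h : G) * g)⁻¹ ∈ H) :=
          fun c => hg ((Stmt11.CF_mul σG H hH h.2 g).1 c)
        rw [hFneg _ hhg, hFneg _ hg, map_zero]
    · intro g
      by_cases hg : σG g * g⁻¹ ∈ H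
      · have hg' : σG (σG⁻¹ g) * (σG⁻¹ g)⁻¹ ∈ H :=
          (Stmt11.CF_inv hℓ σG hσG H hH g).2 hg
        rw [hFpos _ hg', hFpos _ hg]
        have pf' : σG⁻¹ g * (rep g)⁻¹ ∈ H := by
          have := hR2 _ hg'
          rwa [hR4 g hg] at this
        have he : (⟨σG⁻¹ g * (rep (σG⁻¹ g))⁻¹, hR2 _ hg'⟩ : H)
            = ⟨σG⁻¹ g * (rep g)⁻¹, pf'⟩ := by
          apply Subtype.ext
          show σG⁻¹ g * (rep (σG⁻¹ g))⁻¹ = σG⁻¹ g * (rep g)⁻¹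
          rw [hR4 g hg]
        have hwe : φ (rep (σG⁻¹ g)) = φ (rep g) := by rw [hR4 g hg]
        rw [he, hwe, hcompat ⟨σG⁻¹ g * (rep g)⁻¹, pf'⟩ (φ (rep g))]
        rw [hφ1 (rep g) (hR1 g hg)]
        congr 1
        apply congrArg ρ
        apply Subtype.ext
        show σG (σG⁻¹ g * (rep g)⁻¹) = g * (rep g)⁻¹
        rw [map_mul, map_inv, hR1 g hg]
        simp
      · have hg' : ¬(σG (σG⁻¹ g) * (σG⁻¹ g)⁻¹ ∈ H) :=
          fun c => hg ((Stmt11.CF_inv hℓ σG hσG H hH g).1 c)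
        rw [hFneg _ hg', hFneg _ hg, map_zero]
    · intro g hgfix
      have hg : σG g * g⁻¹ ∈ H := hfixCF g hgfix
      have hrfix : σG (rep g) = rep g := hR1 g hg
      have hmem : g * (rep g)⁻¹ ∈ H := hR2 g hg
      have hhfix : σG (g * (rep g)⁻¹) = g * (rep g)⁻¹ := by
        rw [map_mul, map_inv, hgfix, hrfix]
      obtain ⟨v, hv⟩ := hφ2 ⟨g * (rep g)⁻¹, hmem⟩ (rep g) hhfix hrfix
      refine ⟨-v, ?_⟩
      rw [hFpos _ hg, map_neg, ← hv]
      have harg : ((⟨g * (rep g)⁻¹, hmem⟩ : H) : G) * rep g = g :=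
        inv_mul_cancel_right g (rep g)
      rw [harg]
      abel
  -- Part 3
  · intro f hf hNf
    have hf' : ∀ (a : G) (ha : a ∈ H) (x : G), f (a * x) = ρ ⟨a, ha⟩ (f x) :=
      fun a ha x => hf ⟨a, ha⟩ x
    constructor
    · rintro ⟨f', hf', hco⟩ g hgfix
      refine ⟨f' g, ?_⟩
      rw [← hco g, Stmt11.fix_inv σG hgfix]
    · intro hv
      set w : G → V := fun x => if hx : σG x = x then (hv x hx).choose else 0 with hw
      have hwspec : ∀ (x : G) (hx : σG x = x), w x - σV (w x) = f x := by
        intro x hx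
        rw [hw]
        dsimp only
        rw [dif_pos hx]
        exact (hv x hx).choose_spec
      set F : G → V := fun x =>
        if hx : σG x * x⁻¹ ∈ H then ρ ⟨x * (rep x)⁻¹, hR2 x hx⟩ (w (rep x))
        else ∑ j ∈ Finset.range (isel x), (σV ^ j) (f ((σG⁻¹ ^ j) x)) with hF
      have hFpos : ∀ (x : G) (hx : σG x * x⁻¹ ∈ H),
          F x = ρ ⟨x * (rep x)⁻¹, hR2 x hx⟩ (w (rep x)) := by
        intro x hx
        rw [hF]
        dsimp only
        rw [dif_pos hx]
      have hFneg : ∀ (x : G), ¬(σG x * x⁻¹ ∈ H) →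
          F x = ∑ j ∈ Finset.range (isel x), (σV ^ j) (f ((σG⁻¹ ^ j) x)) := by
        intro x hx
        rw [hF]
        dsimp only
        rw [dif_neg hx]
      refine ⟨F, ?_, ?_⟩
      · intro h g
        by_cases hg : σG g * g⁻¹ ∈ H
        · have hhg : σG ((h : G) * g) * ((h : G) * g)⁻¹ ∈ H :=
            (Stmt11.CF_mul σG H hH h.2 g).2 hg
          rw [hFpos _ hhg, hFpos _ hg]
          have he : (⟨(h : G) * g * (rep ((h : G) * g))⁻¹, hR2 _ hhg⟩ : H)
              = h * ⟨g * (rep g)⁻¹, hR2 g hg⟩ := by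
            apply Subtype.ext
            show (h : G) * g * (rep ((h : G) * g))⁻¹ = (h : G) * (g * (rep g)⁻¹)
            rw [hR3 _ _ h.2, mul_assoc]
          have hwe : w (rep ((h : G) * g)) = w (rep g) := by rw [hR3 _ _ h.2]
          rw [he, hwe, map_mul, Module.End.mul_apply]
        · have hhg : ¬(σG ((h : G) * g) * ((h : G) * g)⁻¹ ∈ H) :=
            fun c => hg ((Stmt11.CF_mul σG H hH h.2 g).1 c)
          rw [hFneg _ hhg, hFneg _ hg, hI2 _ _ h.2, map_sum]
          apply Finset.sum_congr rfl
          intro j _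
          have hmemj : (σG⁻¹ ^ j) (h : G) ∈ H :=
            Stmt11.invpow_memH hℓ σG hσG H hH j _ h.2
          have e1 : (σG⁻¹ ^ j) ((h : G) * g) = (σG⁻¹ ^ j) (h : G) * (σG⁻¹ ^ j) g :=
            map_mul _ _ _
          rw [e1, hf' _ hmemj _, Stmt11.commL σG H hH ρ σV hcompat j]
          congr 1
          apply congrArg ρ
          apply Subtype.ext
          show (σG ^ j) ((σG⁻¹ ^ j) (h : G)) = (h : G)
          exact Stmt11.pow_invpow σG j _
      · intro g
        by_cases hg : σG g * g⁻¹ ∈ H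
        · have hg' : σG (σG⁻¹ g) * (σG⁻¹ g)⁻¹ ∈ H :=
            (Stmt11.CF_inv hℓ σG hσG H hH g).2 hg
          rw [hFpos _ hg', hFpos _ hg]
          have pf' : σG⁻¹ g * (rep g)⁻¹ ∈ H := by
            have := hR2 _ hg'
            rwa [hR4 g hg] at this
          have he : (⟨σG⁻¹ g * (rep (σG⁻¹ g))⁻¹, hR2 _ hg'⟩ : H)
              = ⟨σG⁻¹ g * (rep g)⁻¹, pf'⟩ := by
            apply Subtype.ext
            show σG⁻¹ g * (rep (σG⁻¹ g))⁻¹ = σG⁻¹ g * (rep g)⁻¹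
            rw [hR4 g hg]
          have hwe : w (rep (σG⁻¹ g)) = w (rep g) := by rw [hR4 g hg]
          rw [he, hwe, hcompat ⟨σG⁻¹ g * (rep g)⁻¹, pf'⟩ (w (rep g))]
          have he2 : (⟨σG ((⟨σG⁻¹ g * (rep g)⁻¹, pf'⟩ : H) : G),
              hH _ pf'⟩ : H) = ⟨g * (rep g)⁻¹, hR2 g hg⟩ := by
            apply Subtype.ext
            show σG (σG⁻¹ g * (rep g)⁻¹) = g * (rep g)⁻¹
            rw [map_mul, map_inv, hR1 g hg]
            simp
          rw [he2, ← map_sub, hwspec (rep g) (hR1 g hg),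
            ← hf' _ (hR2 g hg) (rep g), inv_mul_cancel_right]
        · have hg' : ¬(σG (σG⁻¹ g) * (σG⁻¹ g)⁻¹ ∈ H) :=
            fun c => hg ((Stmt11.CF_inv hℓ σG hσG H hH g).1 c)
          rw [hFneg _ hg, hFneg _ hg', map_sum]
          have hterm : ∀ j ∈ Finset.range (isel (σG⁻¹ g)),
              σV ((σV ^ j) (f ((σG⁻¹ ^ j) (σG⁻¹ g))))
                = (σV ^ (j + 1)) (f ((σG⁻¹ ^ (j + 1)) g)) := by
            intro j _
            have e1 : (σG⁻¹ ^ (j + 1)) g = (σG⁻¹ ^ j) (σG⁻¹ g) := by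
              rw [pow_succ]; rfl
            have e2 : (σV ^ (j + 1)) (f ((σG⁻¹ ^ (j + 1)) g))
                = σV ((σV ^ j) (f ((σG⁻¹ ^ (j + 1)) g))) := by
              rw [pow_succ']; rfl
            rw [e2, e1]
          rw [Finset.sum_congr rfl hterm]
          by_cases h0 : isel g = 0
          · rw [h0, hI3b g hg h0]
            rw [Finset.range_zero, Finset.sum_empty]
            have hNf' := hNf g
            have hl : ℓ - 1 + 1 = ℓ := by have := hℓ.pos; omega
            rw [← hl, Finset.sum_range_succ'] at hNf'
            have hT0 : (σV ^ 0) (f ((σG⁻¹ ^ 0) g)) = f g := by simp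
            rw [hT0] at hNf'
            have hS : ∑ j ∈ Finset.range (ℓ - 1),
                (σV ^ (j + 1)) (f ((σG⁻¹ ^ (j + 1)) g)) = -(f g) :=
              eq_neg_of_add_eq_zero_left hNf'
            rw [hS]
            abel
          · rw [hI3a g hg h0]
            have hm : isel g = (isel g - 1) + 1 := by omega
            rw [hm, Finset.sum_range_succ']
            have hT0 : (σV ^ 0) (f ((σG⁻¹ ^ 0) g)) = f g := by simp
            rw [hT0, Nat.add_sub_cancel, add_sub_cancel_left]
  -- Part 4
  · intro φ hφ1 hφ2
    set F : G → V := fun x =>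
      if hx : σG x * x⁻¹ ∈ H then ρ ⟨x * (rep x)⁻¹, hR2 x hx⟩ (φ (rep x))
      else 0 with hF
    have hFpos : ∀ (x : G) (hx : σG x * x⁻¹ ∈ H),
        F x = ρ ⟨x * (rep x)⁻¹, hR2 x hx⟩ (φ (rep x)) := by
      intro x hx
      rw [hF]
      dsimp only
      rw [dif_pos hx]
    have hFneg : ∀ (x : G), ¬(σG x * x⁻¹ ∈ H) → F x = 0 := by
      intro x hx
      rw [hF]
      dsimp only
      rw [dif_neg hx]
    refine ⟨F, ?_, ?_, ?_⟩
    · intro h g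
      by_cases hg : σG g * g⁻¹ ∈ H
      · have hhg : σG ((h : G) * g) * ((h : G) * g)⁻¹ ∈ H :=
          (Stmt11.CF_mul σG H hH h.2 g).2 hg
        rw [hFpos _ hhg, hFpos _ hg]
        have he : (⟨(h : G) * g * (rep ((h : G) * g))⁻¹, hR2 _ hhg⟩ : H)
            = h * ⟨g * (rep g)⁻¹, hR2 g hg⟩ := by
          apply Subtype.ext
          show (h : G) * g * (rep ((h : G) * g))⁻¹ = (h : G) * (g * (rep g)⁻¹)
          rw [hR3 _ _ h.2, mul_assoc]
        have hwe : φ (rep ((h : G) * g)) = φ (rep g) := by rw [hR3 _ _ h.2]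
        rw [he, hwe, map_mul, Module.End.mul_apply]
      · have hhg : ¬(σG ((h : G) * g) * ((h : G) * g)⁻¹ ∈ H) :=
          fun c => hg ((Stmt11.CF_mul σG H hH h.2 g).1 c)
        rw [hFneg _ hhg, hFneg _ hg, map_zero]
    · intro g
      by_cases hg : σG g * g⁻¹ ∈ H
      · have hterm : ∀ i ∈ Finset.range ℓ, (σV ^ i) (F ((σG⁻¹ ^ i) g))
            = ρ ⟨g * (rep g)⁻¹, hR2 g hg⟩ ((σV ^ i) (φ (rep g))) := by
          intro i _
          have hci : σG ((σG⁻¹ ^ i) g) * ((σG⁻¹ ^ i) g)⁻¹ ∈ H :=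
            (Stmt11.CF_invpow hℓ σG hσG H hH i g).2 hg
          rw [hFpos _ hci]
          have pf' : (σG⁻¹ ^ i) g * (rep g)⁻¹ ∈ H := by
            have := hR2 _ hci
            rwa [hR4pow i g hg] at this
          have he : (⟨(σG⁻¹ ^ i) g * (rep ((σG⁻¹ ^ i) g))⁻¹, hR2 _ hci⟩ : H)
              = ⟨(σG⁻¹ ^ i) g * (rep g)⁻¹, pf'⟩ := by
            apply Subtype.ext
            show (σG⁻¹ ^ i) g * (rep ((σG⁻¹ ^ i) g))⁻¹ = (σG⁻¹ ^ i) g * (rep g)⁻¹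
            rw [hR4pow i g hg]
          have hwe : φ (rep ((σG⁻¹ ^ i) g)) = φ (rep g) := by rw [hR4pow i g hg]
          rw [he, hwe, Stmt11.commL σG H hH ρ σV hcompat i]
          congr 1
          apply congrArg ρ
          apply Subtype.ext
          show (σG ^ i) ((σG⁻¹ ^ i) g * (rep g)⁻¹) = g * (rep g)⁻¹
          rw [map_mul, map_inv, Stmt11.pow_invpow, Stmt11.fix_pow σG (hR1 g hg) i]
        rw [Finset.sum_congr rfl hterm, ← map_sum, ← hsum,
          hφ1 (rep g) (hR1 g hg), map_zero]
      · have hterm0 : ∀ i ∈ Finset.range ℓ, (σV ^ i) (F ((σG⁻¹ ^ i) g)) = 0 := by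
          intro i _
          have hci : ¬(σG ((σG⁻¹ ^ i) g) * ((σG⁻¹ ^ i) g)⁻¹ ∈ H) :=
            fun c => hg ((Stmt11.CF_invpow hℓ σG hσG H hH i g).1 c)
          rw [hFneg _ hci, map_zero]
        rw [Finset.sum_congr rfl hterm0, Finset.sum_const_zero]
    · intro g hgfix
      have hg : σG g * g⁻¹ ∈ H := hfixCF g hgfix
      have hrfix : σG (rep g) = rep g := hR1 g hg
      have hmem : g * (rep g)⁻¹ ∈ H := hR2 g hg
      have hhfix : σG (g * (rep g)⁻¹) = g * (rep g)⁻¹ := by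
        rw [map_mul, map_inv, hgfix, hrfix]
      obtain ⟨v, hv⟩ := hφ2 ⟨g * (rep g)⁻¹, hmem⟩ (rep g) hhfix hrfix
      refine ⟨-v, ?_⟩
      have harg : ((⟨g * (rep g)⁻¹, hmem⟩ : H) : G) * rep g = g :=
        inv_mul_cancel_right g (rep g)
      rw [harg] at hv
      rw [hFpos _ hg, map_neg]
      have : φ g - ρ (⟨g * (rep g)⁻¹, hmem⟩ : H) (φ (rep g)) = v - σV v := hv
      have goal2 : ρ (⟨g * (rep g)⁻¹, hmem⟩ : H) (φ (rep g)) - φ g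
          = -v - -(σV v) := by
        rw [← neg_sub (φ g), this]
        abel
      exact goal2
end
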